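/- (2-Yang–Baxter equation) Let (G, Δ, R) be a strict quasitriangular 2-bialgebra with invertible 2-R-matrix components Rˡ ∈ G₋₁⊗G₀, Rʳ ∈ G₀⊗G₋₁ satisfying the coproduct compatibility identities and the coproduct permutation identities. Then Rʳ₂₃·(Rʳ₁₃ ▷ Rˡ₁₂) = (Rˡ₁₂ ◁ Rʳ₁₃)·Rʳ₂₃ holds in G₀⊗G₋₁⊗G₋₁ (products and actions taken factorwise with the appropriate grading). -/
import Mathlib


open scoped TensorProduct

structure AssocTwoAlgebra (k : Type*) [CommRing k] (G₀ G₁ : Type*)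
    [NonUnitalRing G₀] [NonUnitalRing G₁] [Module k G₀] [Module k G₁] where
  t : G₁ →ₗ[k] G₀
  t_mul : ∀ y y' : G₁, t (y * y') = t y * t y'
  actL : G₀ →ₗ[k] G₁ →ₗ[k] G₁
  actR : G₁ →ₗ[k] G₀ →ₗ[k] G₁
  actL_mul : ∀ (x x' : G₀) (y : G₁), actL (x * x') y = actL x (actL x' y)
  actLR : ∀ (x : G₀) (y : G₁) (x' : G₀), actR (actL x y) x' = actL x (actR y x')
  actR_mul : ∀ (y : G₁) (x x' : G₀), actR y (x * x') = actR (actR y x) x'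
  equivL : ∀ (x : G₀) (y : G₁), t (actL x y) = x * t y
  equivR : ∀ (y : G₁) (x : G₀), t (actR y x) = t y * x
  peifferL : ∀ y y' : G₁, actL (t y) y' = y * y'
  peifferR : ∀ y y' : G₁, actR y (t y') = y * y'

noncomputable section

variable (k : Type*) [CommRing k]

section Legs

variable (G₀ G₁ : Type*) [Ring G₀] [Algebra k G₀] [Ring G₁] [Algebra k G₁]

/-- place an element of `G₁ ⊗ G₀` in legs 1,3 (unit of `G₀` in leg 2). -/
def legL13 : G₁ ⊗[k] G₀ →ₗ[k] G₁ ⊗[k] (G₀ ⊗[k] G₀) :=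
  TensorProduct.map LinearMap.id (TensorProduct.mk k G₀ G₀ 1)

/-- place an element of `G₁ ⊗ G₀` in legs 1,2 (unit of `G₀` in leg 3). -/
def legL12 : G₁ ⊗[k] G₀ →ₗ[k] G₁ ⊗[k] (G₀ ⊗[k] G₀) :=
  TensorProduct.map LinearMap.id ((TensorProduct.mk k G₀ G₀).flip 1)

/-- place an element of `G₁ ⊗ G₀` in legs 2,3 (unit of `G₀` in leg 1). -/
def legL23 : G₁ ⊗[k] G₀ →ₗ[k] G₀ ⊗[k] (G₁ ⊗[k] G₀) :=
  TensorProduct.mk k G₀ (G₁ ⊗[k] G₀) 1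

/-- place an element of `G₀ ⊗ G₁` in legs 1,3 (unit of `G₀` in leg 2). -/
def legR13 : G₀ ⊗[k] G₁ →ₗ[k] G₀ ⊗[k] (G₀ ⊗[k] G₁) :=
  TensorProduct.map LinearMap.id (TensorProduct.mk k G₀ G₁ 1)

/-- place an element of `G₀ ⊗ G₁` in legs 1,2 (unit of `G₀` in leg 3). -/
def legR12 : G₀ ⊗[k] G₁ →ₗ[k] G₀ ⊗[k] (G₁ ⊗[k] G₀) :=
  TensorProduct.map LinearMap.id ((TensorProduct.mk k G₁ G₀).flip 1)

/-- place an element of `G₀ ⊗ G₁` in legs 2,3 (unit of `G₀` in leg 1). -/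
def legR23 : G₀ ⊗[k] G₁ →ₗ[k] G₀ ⊗[k] (G₀ ⊗[k] G₁) :=
  TensorProduct.mk k G₀ (G₀ ⊗[k] G₁) 1

end Legs

/-- The 2-Yang–Baxter equation
`Rʳ₂₃·(Rʳ₁₃ ▷ Rˡ₁₂) = (Rˡ₁₂ ◁ Rʳ₁₃)·Rʳ₂₃` for an invertible 2-R-matrix of a strict
quasitriangular 2-bialgebra, with products and actions taken factorwise with the
appropriate grading (leg subscripts indicating placement in triple tensor products). -/
theorem two_yang_baxter {G₀ G₁ : Type*} [Ring G₀] [Algebra k G₀] [Ring G₁] [Algebra k G₁]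
    (A : AssocTwoAlgebra k G₀ G₁)
    (Δl : G₀ →ₗ[k] G₁ ⊗[k] G₀) (Δr : G₀ →ₗ[k] G₀ ⊗[k] G₁)
    (hco : TensorProduct.map A.t LinearMap.id ∘ₗ Δl
            = TensorProduct.map LinearMap.id A.t ∘ₗ Δr)
    (Rl : G₁ ⊗[k] G₀) (Rr : G₀ ⊗[k] G₁)
    -- quasitriangularity: both components are invertible
    (hRl : IsUnit Rl) (hRr : IsUnit Rr)
    -- equivariance: (t⊗id)Rˡ = (id⊗t)Rʳ
    (hequiv : TensorProduct.map A.t LinearMap.id Rl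
              = TensorProduct.map LinearMap.id A.t Rr)
    -- compatibility with the coproduct
    (h1 : (TensorProduct.assoc k G₁ G₀ G₁)
            (TensorProduct.map Δl LinearMap.id Rr)
          = TensorProduct.map₂ A.actR
              (TensorProduct.map₂ (LinearMap.mul k G₀) A.actL)
              (legL13 k G₀ G₁ Rl) (legR23 k G₀ G₁ Rr))
    (h2 : (TensorProduct.assoc k G₀ G₁ G₁)
            (TensorProduct.map Δr LinearMap.id Rr)
          = TensorProduct.map₂ (LinearMap.mul k G₀)
              (TensorProduct.map₂ A.actL A.actR)
              (legR13 k G₀ G₁ Rr) (legL23 k G₀ G₁ Rl))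
    (h3 : TensorProduct.map LinearMap.id Δl Rl
          = TensorProduct.map₂ A.actR
              (TensorProduct.map₂ A.actL (LinearMap.mul k G₀))
              (legL13 k G₀ G₁ Rl) (legR12 k G₀ G₁ Rr))
    (h4 : TensorProduct.map LinearMap.id Δr Rl
          = TensorProduct.map₂ A.actL
              (TensorProduct.map₂ (LinearMap.mul k G₀) A.actR)
              (legR13 k G₀ G₁ Rr) (legL12 k G₀ G₁ Rl))
    -- coproduct permutation identities
    (hperm1 : ∀ x : G₀,
      TensorProduct.map₂ (LinearMap.mul k G₀) (LinearMap.mul k G₁) Rr (Δr x)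
        = TensorProduct.map₂ (LinearMap.mul k G₀) (LinearMap.mul k G₁)
            ((TensorProduct.comm k G₁ G₀) (Δl x)) Rr)
    (hperm2 : ∀ x : G₀,
      TensorProduct.map₂ (LinearMap.mul k G₁) (LinearMap.mul k G₀) Rl (Δl x)
        = TensorProduct.map₂ (LinearMap.mul k G₁) (LinearMap.mul k G₀)
            ((TensorProduct.comm k G₀ G₁) (Δr x)) Rl) :
    -- 2-Yang–Baxter equation: Rʳ₂₃·(Rʳ₁₃ ▷ Rˡ₁₂) = (Rˡ₁₂ ◁ Rʳ₁₃)·Rʳ₂₃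
    TensorProduct.map₂ A.actL
        (TensorProduct.map₂ (LinearMap.mul k G₀) (LinearMap.mul k G₁))
        (legR23 k G₀ G₁ Rr)
        (TensorProduct.map₂ A.actL
          (TensorProduct.map₂ (LinearMap.mul k G₀) A.actR)
          (legR13 k G₀ G₁ Rr) (legL12 k G₀ G₁ Rl))
      = TensorProduct.map₂ A.actR
          (TensorProduct.map₂ (LinearMap.mul k G₀) (LinearMap.mul k G₁))
          (TensorProduct.map₂ A.actR
            (TensorProduct.map₂ (LinearMap.mul k G₀) A.actL)
            (legL12 k G₀ G₁ Rl) (legR13 k G₀ G₁ Rr))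
          (legR23 k G₀ G₁ Rr) := by
  -- the unit of `G₀` acts trivially on both sides
  have hL1 : ∀ y : G₁, A.actL 1 y = y := by
    intro y
    have he : A.actL (A.t 1) y = y := by simpa using A.peifferL 1 y
    calc A.actL 1 y = A.actL 1 (A.actL (A.t 1) y) := by rw [he]
      _ = A.actL (1 * A.t 1) y := (A.actL_mul _ _ _).symm
      _ = y := by rw [one_mul, he]
  have hR1 : ∀ y : G₁, A.actR y 1 = y := by
    intro y
    have he : A.actR y (A.t 1) = y := by simpa using A.peifferR y 1
    calc A.actR y 1 = A.actR (A.actR y (A.t 1)) 1 := by rw [he]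
      _ = A.actR y (A.t 1 * 1) := (A.actR_mul _ _ _).symm
      _ = y := by rw [mul_one, he]
  -- swapping legs 2,3 in the compatibility identity `h3`
  have hswap : ∀ (u : G₁ ⊗[k] G₀) (v : G₀ ⊗[k] G₁),
      TensorProduct.map LinearMap.id (TensorProduct.comm k G₁ G₀).toLinearMap
        (TensorProduct.map₂ A.actR
          (TensorProduct.map₂ A.actL (LinearMap.mul k G₀))
          (legL13 k G₀ G₁ u) (legR12 k G₀ G₁ v))
      = TensorProduct.map₂ A.actR
          (TensorProduct.map₂ (LinearMap.mul k G₀) A.actL)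
          (legL12 k G₀ G₁ u) (legR13 k G₀ G₁ v) := by
    intro u v
    induction u using TensorProduct.induction_on with
    | zero => simp
    | add a b ha hb => simp [map_add, LinearMap.add_apply, ha, hb]
    | tmul y x =>
      induction v using TensorProduct.induction_on with
      | zero => simp
      | add a b ha hb => simp [map_add, ha, hb]
      | tmul a b =>
        simp [legL13, legL12, legR12, legR13, TensorProduct.map₂_apply_tmul,
          TensorProduct.map_tmul]
  have h3' : TensorProduct.map LinearMap.id
        ((TensorProduct.comm k G₁ G₀).toLinearMap ∘ₗ Δl) Rl
      = TensorProduct.map₂ A.actR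
          (TensorProduct.map₂ (LinearMap.mul k G₀) A.actL)
          (legL12 k G₀ G₁ Rl) (legR13 k G₀ G₁ Rr) := by
    have := congrArg
      (TensorProduct.map LinearMap.id (TensorProduct.comm k G₁ G₀).toLinearMap) h3
    rw [hswap] at this
    rw [← this, ← LinearMap.comp_apply, ← TensorProduct.map_comp]
    simp
  rw [← h4, ← h3']
  -- now everything is linear in `Rl`
  suffices H : ∀ u : G₁ ⊗[k] G₀,
      TensorProduct.map₂ A.actL
          (TensorProduct.map₂ (LinearMap.mul k G₀) (LinearMap.mul k G₁))
          (legR23 k G₀ G₁ Rr) (TensorProduct.map LinearMap.id Δr u)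
        = TensorProduct.map₂ A.actR
            (TensorProduct.map₂ (LinearMap.mul k G₀) (LinearMap.mul k G₁))
            (TensorProduct.map LinearMap.id
              ((TensorProduct.comm k G₁ G₀).toLinearMap ∘ₗ Δl) u)
            (legR23 k G₀ G₁ Rr) from H Rl
  intro u
  induction u using TensorProduct.induction_on with
  | zero => simp
  | add a b ha hb => simp [map_add, ha, hb]
  | tmul y x =>
    simp only [legR23, TensorProduct.mk_apply, TensorProduct.map_tmul,
      LinearMap.id_coe, id_eq, LinearMap.comp_apply,
      TensorProduct.map₂_apply_tmul, hL1, hR1]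
    exact congrArg (y ⊗ₜ[k] ·) (hperm1 x)

end
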